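/- Let X_1, …, X_n (n ≥ 2) be mutually independent nonnegative random variables with survival functions F̄_1, …, F̄_n, and let θ = (θ_1, …, θ_n) ∈ Δ_n. Then there exists t > 0 such that for all x ∈ [0, t), θ_1 P(X_1 > x) + ⋯ + θ_n P(X_n > x) ≤ P(θ_1 X_1 + ⋯ + θ_n X_n > x); in other words, the survival function of the Categorical(θ) mixture I_1 X_1 + ⋯ + I_n X_n (with I independent of the X_i) is bounded above by that of the weighted average θ_1 X_1 + ⋯ + θ_n X_n on a non-trivial interval [0, t) near the origin. -/

import Mathlib

open MeasureTheory ProbabilityTheory Filter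
open scoped ENNReal Topology


lemma cancel_le' {a b c d : ℝ≥0∞} (h1 : a + b = 1) (h2 : c + d = 1) (h : d ≤ b) : a ≤ c := by
  have hd : d ≠ ∞ := by
    intro hdi; rw [hdi] at h2; simp [ENNReal.add_eq_top] at h2
  have : a + d ≤ c + d := by
    calc a + d ≤ a + b := by gcongr
    _ = c + d := by rw [h1, h2]
  exact (ENNReal.add_le_add_iff_right hd).mp this

lemma cancel_lt' {a b c d : ℝ≥0∞} (h1 : a + b = 1) (h2 : c + d = 1) (h : d < b) : a < c := by
  have ha : a ≠ ∞ := by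
    intro hai; rw [hai] at h1; simp [ENNReal.add_eq_top] at h1
  have hd : d ≠ ∞ := by
    intro hdi; rw [hdi] at h2; simp [ENNReal.add_eq_top] at h2
  have : a + d < c + d := by
    calc a + d < a + b := by exact ENNReal.add_lt_add_left ha h
    _ = c + d := by rw [h1, h2]
  exact (ENNReal.add_lt_add_iff_right hd).mp this

lemma prod_lt_weighted_sum {n : ℕ} (hn : 2 ≤ n) (θ e : Fin n → ℝ)
    (hθ : ∀ i, 0 < θ i) (hθsum : ∑ i, θ i = 1)
    (he0 : ∀ i, 0 ≤ e i) (he1 : ∀ i, e i ≤ 1)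
    (hne1 : ∃ i, e i ≠ 1) (hne0 : ∃ i, e i ≠ 0) :
    ∏ i, e i < ∑ i, θ i * e i := by
  by_cases hz : ∃ a, e a = 0
  · obtain ⟨a, ha⟩ := hz
    rw [Finset.prod_eq_zero (Finset.mem_univ a) ha]
    obtain ⟨k, hk⟩ := hne0
    exact Finset.sum_pos' (fun i _ => mul_nonneg (hθ i).le (he0 i))
      ⟨k, Finset.mem_univ k, mul_pos (hθ k) ((he0 k).lt_of_ne (Ne.symm hk))⟩
  · push_neg at hz
    obtain ⟨m, -, hm⟩ := Finset.exists_min_image Finset.univ e ⟨⟨0, by omega⟩, Finset.mem_univ _⟩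
    by_cases hconst : ∀ j, e j = e m
    · obtain ⟨i, hi⟩ := hne1
      have hv1 : e m < 1 := lt_of_le_of_ne (he1 m) (fun h => hi (by rw [hconst i, h]))
      have hv0 : 0 < e m := (he0 m).lt_of_ne (Ne.symm (hz m))
      have h1 : ∏ j, e j = (e m) ^ n := by
        rw [Finset.prod_congr rfl fun j _ => hconst j, Finset.prod_const, Finset.card_univ,
          Fintype.card_fin]
      have h2 : ∑ j, θ j * e j = e m := by
        rw [Finset.sum_congr rfl fun j _ => by rw [hconst j], ← Finset.sum_mul, hθsum, one_mul]
      rw [h1, h2]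
      calc (e m) ^ n ≤ (e m) ^ 2 := pow_le_pow_of_le_one hv0.le hv1.le hn
      _ < e m := by nlinarith
    · push_neg at hconst
      have hex : ∃ k, e m < e k := by
        by_contra hc; push_neg at hc
        obtain ⟨k, hk⟩ := hconst
        exact hk (le_antisymm (hc k) (hm k (Finset.mem_univ k)))
      obtain ⟨k, hk⟩ := hex
      have h1 : ∏ j, e j ≤ e m := by
        rw [← Finset.mul_prod_erase Finset.univ e (Finset.mem_univ m)]
        calc e m * ∏ j ∈ Finset.univ.erase m, e j ≤ e m * 1 := by
              refine mul_le_mul_of_nonneg_left ?_ (he0 m)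
              exact Finset.prod_le_one (fun j _ => he0 j) (fun j _ => he1 j)
        _ = e m := mul_one _
      have h2 : e m < ∑ j, θ j * e j := by
        have : e m = ∑ j, θ j * e m := by rw [← Finset.sum_mul, hθsum, one_mul]
        rw [this]
        refine Finset.sum_lt_sum (fun j _ => mul_le_mul_of_nonneg_left (hm j (Finset.mem_univ j)) (hθ j).le)
          ⟨k, Finset.mem_univ k, by exact mul_lt_mul_of_pos_left hk (hθ k)⟩
      linarith


/-- local one-basket: the survival function of the Categorical(θ)
mixture (which equals `Σ_i θ_i P(X_i > x)`) is bounded above by that of the weighted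
average on a non-trivial interval `[0, t)` near the origin. -/
theorem local_one_basket
    {Ω : Type*} [MeasurableSpace Ω] (P : Measure Ω) [IsProbabilityMeasure P]
    (n : ℕ) (hn : 2 ≤ n)
    (X : Fin n → Ω → ℝ) (hXmeas : ∀ i, Measurable (X i)) (hXpos : ∀ i ω, 0 ≤ X i ω)
    (hIndep : iIndepFun X P)
    (θ : Fin n → ℝ) (hθ : ∀ i, θ i ∈ Set.Ioo (0 : ℝ) 1) (hθsum : ∑ i, θ i = 1) :
    ∃ t : ℝ, 0 < t ∧ ∀ x : ℝ, 0 ≤ x → x < t →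
      ∑ i, ENNReal.ofReal (θ i) * P {ω | X i ω > x} ≤
        P {ω | ∑ i, θ i * X i ω > x} := by
  haveI : Nonempty (Fin n) := ⟨⟨0, by omega⟩⟩
  -- basic measurability
  have hmIic : ∀ (j : Fin n) (y : ℝ), MeasurableSet {ω | X j ω ≤ y} :=
    fun j y => hXmeas j measurableSet_Iic
  have hSmeas : Measurable (fun ω => ∑ i, θ i * X i ω) :=
    Finset.measurable_sum _ fun i _ => (hXmeas i).const_mul (θ i)
  have hmS : ∀ y : ℝ, MeasurableSet {ω | ∑ i, θ i * X i ω ≤ y} :=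
    fun y => hSmeas measurableSet_Iic
  -- complement identities
  have hcompl : ∀ (j : Fin n) (y : ℝ),
      P {ω | X j ω > y} + P {ω | X j ω ≤ y} = 1 := by
    intro j y
    have hset : {ω | X j ω > y} = {ω | X j ω ≤ y}ᶜ := by
      ext ω; simp [not_le]
    rw [hset, add_comm]
    exact prob_add_prob_compl (hmIic j y)
  have hcomplS : ∀ y : ℝ,
      P {ω | ∑ i, θ i * X i ω > y} + P {ω | ∑ i, θ i * X i ω ≤ y} = 1 := by
    intro y
    have hset : {ω | ∑ i, θ i * X i ω > y} = {ω | ∑ i, θ i * X i ω ≤ y}ᶜ := by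
      ext ω; simp [not_le]
    rw [hset, add_comm]
    exact prob_add_prob_compl (hmS y)
  have hsum1 : ∀ y : ℝ,
      (∑ i, ENNReal.ofReal (θ i) * P {ω | X i ω > y}) +
        (∑ i, ENNReal.ofReal (θ i) * P {ω | X i ω ≤ y}) = 1 := by
    intro y
    rw [← Finset.sum_add_distrib]
    calc ∑ i, (ENNReal.ofReal (θ i) * P {ω | X i ω > y} +
          ENNReal.ofReal (θ i) * P {ω | X i ω ≤ y})
        = ∑ i, ENNReal.ofReal (θ i) := by
          refine Finset.sum_congr rfl fun i _ => ?_
          rw [← mul_add, hcompl i y, mul_one]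
      _ = ENNReal.ofReal (∑ i, θ i) :=
          (ENNReal.ofReal_sum_of_nonneg (fun i _ => (hθ i).1.le)).symm
      _ = 1 := by rw [hθsum, ENNReal.ofReal_one]
  have hprod : ∀ c : Fin n → ℝ,
      P (⋂ j, {ω | X j ω ≤ c j}) = ∏ j, P {ω | X j ω ≤ c j} :=
    fun c => hIndep.meas_iInter fun i => ⟨Set.Iic (c i), measurableSet_Iic, rfl⟩
  by_cases hall1 : ∀ j, P {ω | X j ω ≤ 0} = 1
  · -- all X_j = 0 a.s.
    refine ⟨1, one_pos, fun x hx _ => ?_⟩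
    have hz : ∀ i, P {ω | X i ω > x} = 0 := by
      intro i
      have h0 : P {ω | X i ω > (0:ℝ)} = 0 := by
        have hset : {ω | X i ω > (0:ℝ)} = {ω | X i ω ≤ (0:ℝ)}ᶜ := by ext ω; simp [not_le]
        rw [hset, measure_compl (hmIic i 0) (measure_ne_top _ _), hall1 i]
        simp
      exact measure_mono_null (fun ω hω => lt_of_le_of_lt hx hω) h0
    simp only [hz, mul_zero, Finset.sum_const_zero]
    exact zero_le
  by_cases hall0 : ∀ j, P {ω | X j ω ≤ 0} = 0
  · -- all X_j > 0 a.s. : union bound argument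
    obtain ⟨i₀, -, hi₀⟩ := Finset.exists_min_image Finset.univ θ ⟨⟨0, by omega⟩, Finset.mem_univ _⟩
    set c : ℝ := θ i₀ with hc_def
    have hc : 0 < c := (hθ i₀).1
    -- for each j, find M_j with P (X_j ≤ 1/(M_j+1)) ≤ ofReal c
    have hMj : ∀ j : Fin n, ∃ M : ℕ, P {ω | X j ω ≤ 1 / (M + 1)} ≤ ENNReal.ofReal c := by
      intro j
      have hint : (⋂ m : ℕ, {ω | X j ω ≤ 1 / (m + 1)}) = {ω | X j ω ≤ 0} := by
        ext ω
        simp only [Set.mem_iInter, Set.mem_setOf_eq]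
        constructor
        · intro h
          by_contra hpos
          push_neg at hpos
          obtain ⟨m, hm⟩ := exists_nat_one_div_lt hpos
          exact absurd (h m) (not_le.2 hm)
        · intro h m
          have : (0:ℝ) < 1 / (m + 1) := by positivity
          linarith
      have htend : Tendsto (fun m : ℕ => P {ω | X j ω ≤ 1 / (m + 1)}) atTop
          (𝓝 (P {ω | X j ω ≤ 0})) := by
        have := tendsto_measure_iInter_atTop (μ := P)
          (s := fun m : ℕ => {ω | X j ω ≤ 1 / (m + 1)})
          (fun m => (hmIic j _).nullMeasurableSet)
          (fun a b hab => by
            intro ω hω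
            simp only [Set.mem_setOf_eq] at hω ⊢
            have h1 : (1:ℝ) / (b + 1) ≤ 1 / (a + 1) := by
              apply one_div_le_one_div_of_le (by positivity)
              exact_mod_cast by omega
            linarith)
          ⟨0, measure_ne_top _ _⟩
        rw [hint] at this
        exact this
      rw [hall0 j] at htend
      have : ∀ᶠ m : ℕ in atTop, P {ω | X j ω ≤ 1 / (m + 1)} < ENNReal.ofReal c :=
        htend.eventually_lt_const (by simp [hc])
      obtain ⟨M, hM⟩ := this.exists
      exact ⟨M, hM.le⟩
    choose Mf hMf using hMj
    set M : ℕ := Finset.univ.sup Mf with hM_def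
    have hkey0 : ∀ j : Fin n, P {ω | X j ω ≤ 1 / (M + 1)} ≤ ENNReal.ofReal c := by
      intro j
      refine le_trans (measure_mono ?_) (hMf j)
      intro ω hω
      simp only [Set.mem_setOf_eq] at hω ⊢
      have hMj_le : (Mf j : ℝ) ≤ M := by
        exact_mod_cast Finset.le_sup (Finset.mem_univ j)
      have : (1:ℝ) / (M + 1) ≥ X j ω := hω
      have h1 : (1:ℝ) / (M + 1) ≤ 1 / (Mf j + 1) := by
        apply one_div_le_one_div_of_le (by positivity)
        linarith
      linarith
    refine ⟨c / (M + 1), by positivity, fun x hx hxt => ?_⟩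
    -- key: P (X_j ≤ x / θ j) ≤ ofReal c
    have hkey : ∀ j : Fin n, P {ω | X j ω ≤ x / θ j} ≤ ENNReal.ofReal c := by
      intro j
      refine le_trans (measure_mono ?_) (hkey0 j)
      intro ω hω
      simp only [Set.mem_setOf_eq] at hω ⊢
      have h1 : x / θ j ≤ x / c := by
        apply div_le_div_of_nonneg_left hx hc (hi₀ j (Finset.mem_univ j))
      have h2 : x / c < 1 / (M + 1) := by
        rw [div_lt_div_iff₀ hc (by positivity)]
        have : x * (M + 1) < c := by
          have := (lt_div_iff₀ (by positivity : (0:ℝ) < (M:ℝ) + 1)).mp hxt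
          linarith [this]
        linarith
      linarith
    -- union bound
    have hsub : {ω | ∑ i, θ i * X i ω ≤ x} ⊆
        ⋃ k, ⋂ j, {ω | X j ω ≤ if j = k then x else x / θ j} := by
      intro ω hω
      simp only [Set.mem_setOf_eq] at hω
      have hk : ∃ k, X k ω ≤ x := by
        by_contra h
        push_neg at h
        have hlt : x < ∑ i, θ i * X i ω := by
          calc x = ∑ i, θ i * x := by rw [← Finset.sum_mul, hθsum, one_mul]
            _ < ∑ i, θ i * X i ω := by
              refine Finset.sum_lt_sum_of_nonempty Finset.univ_nonempty fun i _ => ?_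
              exact mul_lt_mul_of_pos_left (h i) (hθ i).1
        linarith
      obtain ⟨k, hk⟩ := hk
      refine Set.mem_iUnion.2 ⟨k, Set.mem_iInter.2 fun j => ?_⟩
      by_cases hjk : j = k
      · simp only [hjk, if_pos rfl, Set.mem_setOf_eq]
        exact hk
      · simp only [if_neg hjk, Set.mem_setOf_eq]
        have h1 : θ j * X j ω ≤ x := by
          have hle : θ j * X j ω ≤ ∑ i, θ i * X i ω := Finset.single_le_sum
            (f := fun i => θ i * X i ω)
            (fun i _ => mul_nonneg (hθ i).1.le (hXpos i ω)) (Finset.mem_univ j)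
          linarith
        rw [le_div_iff₀ (hθ j).1]
        linarith [h1, mul_comm (X j ω) (θ j)]
    have hub : P {ω | ∑ i, θ i * X i ω ≤ x} ≤
        ∑ k, ENNReal.ofReal (θ k) * P {ω | X k ω ≤ x} := by
      calc P {ω | ∑ i, θ i * X i ω ≤ x}
          ≤ ∑' k, P (⋂ j, {ω | X j ω ≤ if j = k then x else x / θ j}) :=
            (measure_mono hsub).trans (measure_iUnion_le _)
        _ = ∑ k, P (⋂ j, {ω | X j ω ≤ if j = k then x else x / θ j}) := tsum_fintype _
        _ ≤ ∑ k, ENNReal.ofReal (θ k) * P {ω | X k ω ≤ x} := by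
            refine Finset.sum_le_sum fun k _ => ?_
            rw [hprod]
            rw [← Finset.mul_prod_erase Finset.univ _ (Finset.mem_univ k)]
            simp only [if_pos rfl]
            rw [mul_comm (ENNReal.ofReal (θ k))]
            refine mul_le_mul' le_rfl ?_
            -- ∏ over erase k ≤ ofReal (θ k)
            haveI : Nontrivial (Fin n) := Fin.nontrivial_iff_two_le.mpr hn
            obtain ⟨j0, hj0⟩ := exists_ne k
            have hj0mem : j0 ∈ Finset.univ.erase k := Finset.mem_erase.2 ⟨hj0, Finset.mem_univ _⟩
            calc ∏ j ∈ Finset.univ.erase k, P {ω | X j ω ≤ if j = k then x else x / θ j}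
                = ∏ j ∈ Finset.univ.erase k, P {ω | X j ω ≤ x / θ j} := by
                  refine Finset.prod_congr rfl fun j hj => ?_
                  rw [if_neg (Finset.ne_of_mem_erase hj)]
              _ ≤ P {ω | X j0 ω ≤ x / θ j0} := by
                  rw [← Finset.mul_prod_erase _ _ hj0mem]
                  calc P {ω | X j0 ω ≤ x / θ j0} *
                      ∏ j ∈ (Finset.univ.erase k).erase j0, P {ω | X j ω ≤ x / θ j}
                      ≤ P {ω | X j0 ω ≤ x / θ j0} * 1 :=
                        mul_le_mul' le_rfl (Finset.prod_le_one (fun _ _ => zero_le)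
                          (fun j _ => prob_le_one))
                    _ = _ := mul_one _
              _ ≤ ENNReal.ofReal c := hkey j0
              _ ≤ ENNReal.ofReal (θ k) := ENNReal.ofReal_le_ofReal (hi₀ k (Finset.mem_univ k))
    exact cancel_le' (hsum1 x) (hcomplS x) hub
  · -- mixed case: strict inequality at 0
    push_neg at hall1 hall0
    have hiInter0 : {ω | ∑ i, θ i * X i ω ≤ 0} = ⋂ j, {ω | X j ω ≤ (0:ℝ)} := by
      ext ω
      simp only [Set.mem_setOf_eq, Set.mem_iInter]
      constructor
      · intro hω j
        by_contra hpos
        push_neg at hpos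
        have h1 : θ j * X j ω ≤ ∑ i, θ i * X i ω := Finset.single_le_sum
          (f := fun i => θ i * X i ω)
          (fun i _ => mul_nonneg (hθ i).1.le (hXpos i ω)) (Finset.mem_univ j)
        nlinarith [mul_pos (hθ j).1 hpos]
      · intro h
        have : ∀ j ∈ Finset.univ, θ j * X j ω = 0 := fun j _ => by
          have hzero : X j ω = 0 := le_antisymm (h j) (hXpos j ω)
          rw [hzero, mul_zero]
        rw [Finset.sum_eq_zero this]
    -- strict inequality ∏ e < Σ θ e
    have hfin : ∀ j, P {ω | X j ω ≤ (0:ℝ)} ≠ ∞ := fun j => measure_ne_top _ _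
    have hstrict : ∏ j, P {ω | X j ω ≤ (0:ℝ)} <
        ∑ j, ENNReal.ofReal (θ j) * P {ω | X j ω ≤ (0:ℝ)} := by
      have hreal : ∏ j, (P {ω | X j ω ≤ (0:ℝ)}).toReal <
          ∑ j, θ j * (P {ω | X j ω ≤ (0:ℝ)}).toReal := by
        refine prod_lt_weighted_sum hn θ _ (fun i => (hθ i).1) hθsum
          (fun i => ENNReal.toReal_nonneg)
          (fun i => ?_) ?_ ?_
        · rw [← ENNReal.toReal_one]
          exact ENNReal.toReal_mono ENNReal.one_ne_top prob_le_one
        · obtain ⟨j, hj⟩ := hall1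
          refine ⟨j, fun h => hj ?_⟩
          exact (ENNReal.toReal_eq_one_iff _).mp h
        · obtain ⟨j, hj⟩ := hall0
          refine ⟨j, fun h => hj ?_⟩
          exact ((ENNReal.toReal_eq_zero_iff _).mp h).resolve_right (hfin j)
      have h1 : (∏ j, P {ω | X j ω ≤ (0:ℝ)}).toReal = ∏ j, (P {ω | X j ω ≤ (0:ℝ)}).toReal :=
        ENNReal.toReal_prod _ _
      have h2 : (∑ j, ENNReal.ofReal (θ j) * P {ω | X j ω ≤ (0:ℝ)}).toReal =
          ∑ j, θ j * (P {ω | X j ω ≤ (0:ℝ)}).toReal := by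
        rw [ENNReal.toReal_sum (fun j _ => ENNReal.mul_ne_top ENNReal.ofReal_ne_top (hfin j))]
        refine Finset.sum_congr rfl fun j _ => ?_
        rw [ENNReal.toReal_mul, ENNReal.toReal_ofReal (hθ j).1.le]
      have hfin1 : ∏ j, P {ω | X j ω ≤ (0:ℝ)} ≠ ∞ :=
        ne_top_of_le_ne_top ENNReal.one_ne_top
          (Finset.prod_le_one (fun _ _ => zero_le) (fun j _ => prob_le_one))
      have hfin2 : ∑ j, ENNReal.ofReal (θ j) * P {ω | X j ω ≤ (0:ℝ)} ≠ ∞ :=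
        (ENNReal.sum_lt_top.mpr (fun j _ =>
          ENNReal.mul_lt_top ENNReal.ofReal_lt_top (measure_lt_top _ _))).ne
      rw [← ENNReal.toReal_lt_toReal hfin1 hfin2, h1, h2]
      exact hreal
    have hL_lt : (∑ i, ENNReal.ofReal (θ i) * P {ω | X i ω > (0:ℝ)}) <
        P {ω | ∑ i, θ i * X i ω > (0:ℝ)} := by
      refine cancel_lt' (hsum1 0) (hcomplS 0) ?_
      rw [hiInter0, hprod]
      exact hstrict
    -- right-continuity of the RHS at 0
    have hunion : (⋃ m : ℕ, {ω | ∑ i, θ i * X i ω > 1 / (m + 1)}) =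
        {ω | ∑ i, θ i * X i ω > (0:ℝ)} := by
      ext ω
      simp only [Set.mem_iUnion, Set.mem_setOf_eq]
      constructor
      · rintro ⟨m, hm⟩
        have : (0:ℝ) < 1 / (m + 1) := by positivity
        linarith
      · intro h
        obtain ⟨m, hm⟩ := exists_nat_one_div_lt h
        exact ⟨m, hm⟩
    have htendS : Tendsto (fun m : ℕ => P {ω | ∑ i, θ i * X i ω > 1 / (m + 1)}) atTop
        (𝓝 (P {ω | ∑ i, θ i * X i ω > (0:ℝ)})) := by
      have hmono : Monotone (fun m : ℕ => {ω | ∑ i, θ i * X i ω > 1 / (m + 1)}) := by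
        intro a b hab ω hω
        simp only [Set.mem_setOf_eq] at hω ⊢
        have h1 : (1:ℝ) / (b + 1) ≤ 1 / (a + 1) := by
          apply one_div_le_one_div_of_le (by positivity)
          exact_mod_cast by omega
        linarith
      have := tendsto_measure_iUnion_atTop (μ := P) hmono
      rw [hunion] at this
      exact this
    have hev : ∀ᶠ m : ℕ in atTop,
        (∑ i, ENNReal.ofReal (θ i) * P {ω | X i ω > (0:ℝ)}) <
          P {ω | ∑ i, θ i * X i ω > 1 / (m + 1)} :=
      htendS.eventually_const_lt hL_lt
    obtain ⟨M, hM⟩ := hev.exists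
    refine ⟨1 / (M + 1), by positivity, fun x hx hxt => ?_⟩
    have hstep1 : (∑ i, ENNReal.ofReal (θ i) * P {ω | X i ω > x}) ≤
        ∑ i, ENNReal.ofReal (θ i) * P {ω | X i ω > (0:ℝ)} := by
      refine Finset.sum_le_sum fun i _ => mul_le_mul' le_rfl (measure_mono ?_)
      intro ω hω
      simp only [Set.mem_setOf_eq] at hω ⊢
      linarith
    have hstep2 : P {ω | ∑ i, θ i * X i ω > 1 / (M + 1)} ≤
        P {ω | ∑ i, θ i * X i ω > x} := by
      refine measure_mono fun ω hω => ?_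
      simp only [Set.mem_setOf_eq] at hω ⊢
      linarith
    exact le_of_lt (lt_of_le_of_lt hstep1 (lt_of_lt_of_le hM hstep2))
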